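/- arXiv:0904.1557 — 2 statements merged into one kernel-verified Lean document; each statement's English description precedes it below -/
import Mathlib

section
/- Let g: ℝ → ℝ be continuous with limsup_{s→0⁺} g(s)/s = −m < 0 and lim_{s→±∞} g(s)/s⁵ = 0. Define g₁(s) = (g(s) + ms)⁺ for s ≥ 0 and g₁(s) = 0 for s < 0, and g₂(s) = g₁(s) − g(s). Then for every ε > 0 there exists C_ε > 0 such that g₁(s) ≤ C_ε s⁵ + ε g₂(s) for all s ≥ 0. -/
open MeasureTheory Filter Topology Metric
open scoped RealInnerProductSpace ENNReal NNReal

noncomputable section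

abbrev E3 := EuclideanSpace ℝ (Fin 3)

/-- Membership in the Sobolev space `H¹(ℝ³)`: the function and its gradient are in `L²`. -/
def MemH1 (u : E3 → ℝ) : Prop :=
  MemLp u 2 (volume : Measure E3) ∧ MemLp (fun x => gradient u x) 2 (volume : Measure E3)

/-- Membership in `D^{1,2}(ℝ³)`, characterized as `L⁶` functions with gradient in `L²`
(this coincides with the completion of `C_c^∞` under the gradient `L²` norm). -/
def MemD12 (φ : E3 → ℝ) : Prop :=
  MemLp φ 6 (volume : Measure E3) ∧ MemLp (fun x => gradient φ x) 2 (volume : Measure E3)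

/-- `φ` is a weak solution of `-Δφ = q u²` in `D^{1,2}(ℝ³)`:
`∫ ∇φ·∇v = q ∫ u² v` for every test function `v ∈ D^{1,2}(ℝ³)`. -/
def WeakSol (q : ℝ) (u φ : E3 → ℝ) : Prop :=
  MemD12 φ ∧ ∀ v : E3 → ℝ, MemD12 v →
    ∫ x : E3, ⟪gradient φ x, gradient v x⟫ = q * ∫ x : E3, u x ^ 2 * v x


/-- Truncated pieces of the nonlinearity. -/
def gOne (g : ℝ → ℝ) (m : ℝ) (s : ℝ) : ℝ := if 0 ≤ s then max (g s + m * s) 0 else 0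

def gTwo (g : ℝ → ℝ) (m : ℝ) (s : ℝ) : ℝ := gOne g m s - g s

/-- For every `ε > 0` there is `C_ε > 0` with `g₁(s) ≤ C_ε s⁵ + ε g₂(s)` for all `s ≥ 0`. -/
theorem g1_le_g2 (g : ℝ → ℝ) (hg : Continuous g) (m : ℝ) (hm : 0 < m)
    (h0 : Filter.limsup (fun s => g s / s) (nhdsWithin (0 : ℝ) (Set.Ioi 0)) = -m)
    (htop : Tendsto (fun s => g s / s ^ 5) atTop (nhds (0 : ℝ)))
    (hbot : Tendsto (fun s => g s / s ^ 5) atBot (nhds (0 : ℝ))) :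
    ∀ ε : ℝ, 0 < ε → ∃ C : ℝ, 0 < C ∧ ∀ s : ℝ, 0 ≤ s →
      gOne g m s ≤ C * s ^ 5 + ε * gTwo g m s := by
  intro eps heps
  -- boundedness of g s / s near 0+
  have hb : Filter.IsBoundedUnder (· ≤ ·) (nhdsWithin (0:ℝ) (Set.Ioi 0)) (fun s => g s / s) := by
    by_contra hub
    have hset : {a : ℝ | ∀ᶠ s in nhdsWithin (0:ℝ) (Set.Ioi 0), g s / s ≤ a} = ∅ := by
      ext a
      simp only [Set.mem_setOf_eq, Set.mem_empty_iff_false, iff_false]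
      intro ha
      exact hub ⟨a, by simpa [Filter.eventually_map] using ha⟩
    rw [Filter.limsup_eq, hset, Real.sInf_empty] at h0
    linarith
  have hev : ∀ᶠ s in nhdsWithin (0:ℝ) (Set.Ioi 0), g s / s < -m + eps * m := by
    refine Filter.eventually_lt_of_limsup_lt ?_ hb
    rw [h0]; nlinarith
  obtain ⟨s₀, hs₀mem, hs₀⟩ := mem_nhdsGT_iff_exists_Ioo_subset.mp hev
  have hs₀pos : (0:ℝ) < s₀ := hs₀mem
  -- large s bound
  have hlarge : ∀ᶠ s in atTop, g s / s ^ 5 ≤ 1 := by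
    have := htop.eventually (eventually_le_nhds (by norm_num : (0:ℝ) < 1))
    exact this
  obtain ⟨M₀, hM₀⟩ := eventually_atTop.mp hlarge
  set M : ℝ := max M₀ (max s₀ 1) with hMdef
  have hMs₀ : s₀ ≤ M := le_trans (le_max_left _ _) (le_max_right _ _)
  have hM1 : (1:ℝ) ≤ M := le_trans (le_max_right _ _) (le_max_right _ _)
  have hMM₀ : M₀ ≤ M := le_max_left _ _
  -- middle bound
  have hcont : Continuous (fun s : ℝ => max (g s + m * s) 0) :=
    (hg.add (continuous_const.mul continuous_id)).max continuous_const
  obtain ⟨B, hB⟩ := (isCompact_Icc : IsCompact (Set.Icc s₀ M)).exists_bound_of_continuousOn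
    hcont.continuousOn
  have hBnn : 0 ≤ B := le_trans (norm_nonneg _) (hB s₀ ⟨le_refl _, hMs₀⟩)
  -- g 0 ≤ 0
  have hg0 : g 0 ≤ 0 := by
    have h1 : Tendsto g (nhdsWithin (0:ℝ) (Set.Ioi 0)) (nhds (g 0)) :=
      (hg.tendsto 0).mono_left nhdsWithin_le_nhds
    have h2 : Tendsto (fun s : ℝ => (-m + eps * m) * s) (nhdsWithin (0:ℝ) (Set.Ioi 0))
        (nhds (0:ℝ)) := by
      have h3 : Tendsto (fun s : ℝ => (-m + eps * m) * s) (nhds (0:ℝ))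
          (nhds ((-m + eps * m) * 0)) := (continuous_const.mul continuous_id).tendsto 0
      simpa using h3.mono_left nhdsWithin_le_nhds
    refine le_of_tendsto_of_tendsto h1 h2 ?_
    filter_upwards [hev, self_mem_nhdsWithin] with s hsv hsmem
    have hspos : (0:ℝ) < s := hsmem
    have : g s = (g s / s) * s := by field_simp
    rw [this]
    nlinarith
  -- the constant
  refine ⟨max (1 + m) (max (B / s₀ ^ 5) 1), lt_of_lt_of_le one_pos
    (le_trans (le_max_right _ _) (le_max_right _ _)), ?_⟩
  set C : ℝ := max (1 + m) (max (B / s₀ ^ 5) 1) with hCdef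
  have hC1 : 0 ≤ C := le_trans zero_le_one (le_trans (le_max_right _ _) (le_max_right _ _))
  intro s hs
  have hone : gOne g m s = max (g s + m * s) 0 := if_pos hs
  have hg2 : m * s ≤ gTwo g m s := by
    unfold gTwo
    rw [hone]
    have := le_max_left (g s + m * s) 0
    linarith
  have hg2nn : 0 ≤ gTwo g m s := le_trans (by nlinarith) hg2
  rcases eq_or_lt_of_le hs with h1 | hspos
  · -- s = 0
    rw [hone, ← h1]
    have : max (g 0 + m * 0) 0 = 0 := max_eq_right (by linarith)
    rw [this]
    have : (0:ℝ) ≤ eps * gTwo g m 0 := by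
      have : gTwo g m 0 = gTwo g m s := by rw [← h1]
      nlinarith
    nlinarith
  · have hs5 : (0:ℝ) < s ^ 5 := by positivity
    have hrhsA : 0 ≤ C * s ^ 5 := by positivity
    by_cases h2 : s < s₀
    · -- small s
      have hmem : s ∈ Set.Ioo (0:ℝ) s₀ := ⟨hspos, h2⟩
      have hlt : g s / s < -m + eps * m := hs₀ hmem
      have hgs : g s + m * s ≤ eps * (m * s) := by
        have : g s = (g s / s) * s := by field_simp
        nlinarith
      rw [hone]
      refine max_le ?_ (by nlinarith)
      have : eps * (m * s) ≤ eps * gTwo g m s := by nlinarith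
      nlinarith
    · push_neg at h2
      by_cases h3 : s ≤ M
      · -- middle
        have hmem : s ∈ Set.Icc s₀ M := ⟨h2, h3⟩
        have hBb : max (g s + m * s) 0 ≤ B := by
          have := hB s hmem
          calc max (g s + m * s) 0 ≤ ‖max (g s + m * s) 0‖ := le_abs_self _
            _ ≤ B := this
        have hs₀5 : (0:ℝ) < s₀ ^ 5 := by positivity
        have hsge : s₀ ^ 5 ≤ s ^ 5 := by
          apply pow_le_pow_left₀ (le_of_lt hs₀pos) h2
        have hCB : B / s₀ ^ 5 ≤ C := le_trans (le_max_left _ _) (le_max_right _ _)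
        have : B ≤ C * s ^ 5 := by
          have h4 : B = (B / s₀ ^ 5) * s₀ ^ 5 := by field_simp
          have h5 : (B / s₀ ^ 5) * s₀ ^ 5 ≤ C * s ^ 5 := by
            apply mul_le_mul hCB hsge (le_of_lt hs₀5) hC1
          linarith
        rw [hone]
        nlinarith
      · -- large
        push_neg at h3
        have hsM : M ≤ s := le_of_lt h3
        have hgq : g s / s ^ 5 ≤ 1 := hM₀ s (le_trans hMM₀ hsM)
        have hs1 : (1:ℝ) ≤ s := le_trans hM1 hsM
        have hgs : g s ≤ s ^ 5 := by
          have : g s = (g s / s ^ 5) * s ^ 5 := by field_simp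
          nlinarith
        have hss5 : s ≤ s ^ 5 := le_self_pow₀ hs1 (by norm_num)
        have hCm : 1 + m ≤ C := le_max_left _ _
        rw [hone]
        have hms : m * s ≤ m * s ^ 5 := mul_le_mul_of_nonneg_left hss5 hm.le
        have h6 : g s + m * s ≤ (1 + m) * s ^ 5 := by linarith [hgs]
        have h7 : (1 + m) * s ^ 5 ≤ C * s ^ 5 := mul_le_mul_of_nonneg_right hCm hs5.le
        have h8 : 0 ≤ eps * gTwo g m s := mul_nonneg heps.le hg2nn
        exact max_le (by linarith) (by linarith)
end
end

section
/- Let g₂: ℝ → ℝ be continuous with g₂(s)s = m s² + h(s) where h ≥ 0 is continuous, and let (u_n) ⊂ H^1(ℝ³) with u_n → u a.e., ∫g₂(u_n)u_n → ∫g₂(u)u < ∞. Then, up to a subsequence, ∫_{ℝ³} u_n² → ∫_{ℝ³} u². -/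
open MeasureTheory Filter Topology Metric
open scoped RealInnerProductSpace ENNReal NNReal

noncomputable section

lemma fatou_real {α : Type*} [MeasurableSpace α] {μ : Measure α} {f : ℕ → α → ℝ} {g : α → ℝ}
    (hf : ∀ n, Integrable (f n) μ) (hg : Integrable g μ)
    (hnn : ∀ n, 0 ≤ᵐ[μ] f n)
    (hae : ∀ᵐ x ∂μ, Tendsto (fun n => f n x) atTop (nhds (g x)))
    {C : ℝ} (hC : ∀ n, ∫ x, f n x ∂μ ≤ C) :
    ∫ x, g x ∂μ ≤ Filter.liminf (fun n => ∫ x, f n x ∂μ) Filter.atTop := by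
  have hgnn : 0 ≤ᵐ[μ] g := by
    have := (ae_all_iff.2 hnn).and hae
    filter_upwards [this] with x ⟨h1, h2⟩
    exact le_of_tendsto_of_tendsto tendsto_const_nhds h2 (Eventually.of_forall h1)
  have key : ∫⁻ x, ENNReal.ofReal (g x) ∂μ
      ≤ Filter.liminf (fun n => ∫⁻ x, ENNReal.ofReal (f n x) ∂μ) Filter.atTop := by
    have : ∫⁻ x, ENNReal.ofReal (g x) ∂μ
        = ∫⁻ x, Filter.liminf (fun n => ENNReal.ofReal (f n x)) Filter.atTop ∂μ := by
      refine lintegral_congr_ae ?_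
      filter_upwards [hae] with x hx
      exact (Tendsto.liminf_eq ((ENNReal.continuous_ofReal.tendsto _).comp hx)).symm
    rw [this]
    exact lintegral_liminf_le' fun n => ((hf n).aemeasurable.aestronglyMeasurable.aemeasurable).ennreal_ofReal
  have heq : ∀ n, ∫⁻ x, ENNReal.ofReal (f n x) ∂μ = ENNReal.ofReal (∫ x, f n x ∂μ) :=
    fun n => (ofReal_integral_eq_lintegral_ofReal (hf n) (hnn n)).symm
  have heqg : ∫⁻ x, ENNReal.ofReal (g x) ∂μ = ENNReal.ofReal (∫ x, g x ∂μ) :=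
    (ofReal_integral_eq_lintegral_ofReal hg hgnn).symm
  rw [heqg] at key
  simp_rw [heq] at key
  have hb : ∀ᶠ n in atTop, ENNReal.ofReal (∫ x, f n x ∂μ) ≤ ENNReal.ofReal C :=
    Eventually.of_forall fun n => ENNReal.ofReal_le_ofReal (hC n)
  have h2 := ENNReal.liminf_toReal_eq (f := atTop) (b := ENNReal.ofReal C)
    ENNReal.ofReal_ne_top hb
  have h3 : Filter.liminf (fun n => ∫ x, f n x ∂μ) Filter.atTop
      ≥ (Filter.liminf (fun n => ENNReal.ofReal (∫ x, f n x ∂μ)) Filter.atTop).toReal := by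
    rw [← h2]
    apply ge_of_eq
    apply Filter.liminf_congr
    filter_upwards with n
    rw [ENNReal.toReal_ofReal (integral_nonneg_of_ae (hnn n))]
  refine le_trans ?_ h3
  have hfin : Filter.liminf (fun n => ENNReal.ofReal (∫ x, f n x ∂μ)) Filter.atTop ≠ ⊤ := by
    intro hcontra
    have : Filter.liminf (fun n => ENNReal.ofReal (∫ x, f n x ∂μ)) Filter.atTop ≤ ENNReal.ofReal C := by
      apply liminf_le_of_le ⟨0, by simp⟩
      intro y h
      obtain ⟨i, hi⟩ := (h.and hb).exists
      exact hi.1.trans hi.2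
    rw [hcontra] at this
    exact ENNReal.ofReal_ne_top (top_le_iff.mp this)
  calc ∫ x, g x ∂μ = (ENNReal.ofReal (∫ x, g x ∂μ)).toReal := by
        rw [ENNReal.toReal_ofReal (integral_nonneg_of_ae hgnn)]
    _ ≤ _ := ENNReal.toReal_mono hfin key

/-- If `g₂(s)s = m s² + h(s)` with `h ≥ 0`, `u_n → u` a.e. and
`∫ g₂(u_n)u_n → ∫ g₂(u)u`, then, up to a subsequence, `∫ u_n² → ∫ u²`. -/
theorem L2_convergence (g₂ h : ℝ → ℝ) (hg₂ : Continuous g₂) (hh : Continuous h)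
    (hhpos : ∀ s : ℝ, 0 ≤ h s) (m : ℝ) (hm : 0 < m)
    (hsplit : ∀ s : ℝ, g₂ s * s = m * s ^ 2 + h s)
    (u : ℕ → E3 → ℝ) (v : E3 → ℝ)
    (hmem : ∀ n, MemLp (u n) 2 (volume : Measure E3))
    (hvmem : MemLp v 2 (volume : Measure E3))
    (hae : ∀ᵐ x : E3 ∂(volume : Measure E3), Tendsto (fun n => u n x) atTop (nhds (v x)))
    (hint : ∀ n, Integrable (fun x : E3 => g₂ (u n x) * u n x))
    (hvint : Integrable (fun x : E3 => g₂ (v x) * v x))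
    (hconv : Tendsto (fun n => ∫ x : E3, g₂ (u n x) * u n x) atTop
      (nhds (∫ x : E3, g₂ (v x) * v x))) :
    ∃ ns : ℕ → ℕ, StrictMono ns ∧
      Tendsto (fun k => ∫ x : E3, u (ns k) x ^ 2) atTop (nhds (∫ x : E3, v x ^ 2)) := by
  -- Notation
  set A : ℕ → ℝ := fun n => ∫ x : E3, u n x ^ 2 with hAdef
  set B : ℕ → ℝ := fun n => ∫ x : E3, h (u n x) with hBdef
  have intsq : ∀ n, Integrable (fun x : E3 => u n x ^ 2) := fun n => (hmem n).integrable_sq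
  have intsqv : Integrable (fun x : E3 => v x ^ 2) := hvmem.integrable_sq
  have inth : ∀ n, Integrable (fun x : E3 => h (u n x)) := by
    intro n
    have heq : (fun x : E3 => h (u n x)) = fun x => g₂ (u n x) * u n x - m * u n x ^ 2 :=
      funext fun x => by have := hsplit (u n x); linarith
    rw [heq]
    exact (hint n).sub ((intsq n).const_mul m)
  have inthv : Integrable (fun x : E3 => h (v x)) := by
    have heq : (fun x : E3 => h (v x)) = fun x => g₂ (v x) * v x - m * v x ^ 2 :=
      funext fun x => by have := hsplit (v x); linarith
    rw [heq]
    exact hvint.sub (intsqv.const_mul m)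
  have eqn : ∀ n, (∫ x : E3, g₂ (u n x) * u n x) = m * A n + B n := by
    intro n
    have h1 : (fun x : E3 => g₂ (u n x) * u n x) = fun x => m * u n x ^ 2 + h (u n x) :=
      funext fun x => hsplit _
    rw [h1, integral_add ((intsq n).const_mul m) (inth n), integral_const_mul]
  have eqv : (∫ x : E3, g₂ (v x) * v x) = m * (∫ x : E3, v x ^ 2) + ∫ x : E3, h (v x) := by
    have h1 : (fun x : E3 => g₂ (v x) * v x) = fun x => m * v x ^ 2 + h (v x) :=
      funext fun x => hsplit _
    rw [h1, integral_add (intsqv.const_mul m) inthv, integral_const_mul]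
  have hs : Tendsto (fun n => m * A n + B n) atTop
      (nhds (m * (∫ x : E3, v x ^ 2) + ∫ x : E3, h (v x))) := by
    rw [← eqv]
    have : (fun n => m * A n + B n) = fun n => ∫ x : E3, g₂ (u n x) * u n x :=
      funext fun n => (eqn n).symm
    rw [this]; exact hconv
  have hAnn : ∀ n, 0 ≤ A n := fun n => integral_nonneg fun x => sq_nonneg _
  have hBnn : ∀ n, 0 ≤ B n := fun n => integral_nonneg fun x => hhpos _
  -- boundedness
  obtain ⟨C, hC⟩ : ∃ C : ℝ, ∀ n, m * A n + B n ≤ C := by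
    obtain ⟨C, hC⟩ := hs.bddAbove_range
    exact ⟨C, fun n => hC (Set.mem_range_self n)⟩
  have hAle : ∀ n, A n ≤ C / m := by
    intro n
    rw [le_div_iff₀ hm]
    have := hBnn n; have := hC n; linarith [mul_comm (A n) m]
  have hBle : ∀ n, B n ≤ C := by
    intro n
    have := mul_nonneg hm.le (hAnn n); have := hC n; linarith
  -- Fatou for A
  have hA : (∫ x : E3, v x ^ 2) ≤ Filter.liminf A Filter.atTop := by
    apply fatou_real (f := fun n x => u n x ^ 2) (intsq) intsqv
      (fun n => Eventually.of_forall fun x => sq_nonneg _) ?_ hAle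
    filter_upwards [hae] with x hx
    exact hx.pow 2
  -- Fatou for B
  have hB : (∫ x : E3, h (v x)) ≤ Filter.liminf B Filter.atTop := by
    apply fatou_real (f := fun n x => h (u n x)) (inth) inthv
      (fun n => Eventually.of_forall fun x => hhpos _) ?_ hBle
    filter_upwards [hae] with x hx
    exact (hh.tendsto _).comp hx
  refine ⟨id, strictMono_id, ?_⟩
  simp only [id]
  rw [Metric.tendsto_atTop]
  intro ε hε
  have hcobA : Filter.IsBoundedUnder (· ≥ ·) Filter.atTop A :=
    Filter.isBoundedUnder_of ⟨0, fun n => hAnn n⟩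
  have hcobB : Filter.IsBoundedUnder (· ≥ ·) Filter.atTop B :=
    Filter.isBoundedUnder_of ⟨0, fun n => hBnn n⟩
  have ev1 : ∀ᶠ n in atTop, (∫ x : E3, v x ^ 2) - ε < A n := by
    apply Filter.eventually_lt_of_lt_liminf (lt_of_lt_of_le (by linarith) hA) hcobA
  have ev2 : ∀ᶠ n in atTop, (∫ x : E3, h (v x)) - m * ε / 2 < B n := by
    apply Filter.eventually_lt_of_lt_liminf
      (lt_of_lt_of_le (by nlinarith) hB) hcobB
  have ev3 : ∀ᶠ n in atTop,
      m * A n + B n < m * (∫ x : E3, v x ^ 2) + (∫ x : E3, h (v x)) + m * ε / 2 :=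
    hs.eventually (eventually_lt_nhds (by nlinarith))
  obtain ⟨N, hN⟩ := ((ev1.and ev2).and ev3).exists_forall_of_atTop
  refine ⟨N, fun n hn => ?_⟩
  obtain ⟨⟨h1, h2⟩, h3⟩ := hN n hn
  rw [Real.dist_eq, abs_lt]
  constructor
  · nlinarith
  · nlinarith
end
end
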